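/- Let d ≥ 2 and suppose [n] is the disjoint union of sets X_1,…,X_e. Let D = {(A_i^{(1)},…,A_i^{(d)})}_{1≤i≤m} be a symmetric Bollobás system of d-partitions of [n]. Let s_k = |X_k ∩ (⋃_{i=1}^m ⋃_{r=1}^d A_i^{(r)})| for k ∈ [e]. Then ∑_{i=1}^m ( ∏_{k=1}^e binom(∑_{r=1}^d |A_i^{(r)} ∩ X_k|; |A_i^{(1)} ∩ X_k|,…,|A_i^{(d)} ∩ X_k|) )^{-1} ≤ min_{l∈[e]} ( ∏_{k=1}^e binom(s_k + d - 1, d - 1) ) / binom(s_l + d - 1, d - 1). -/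

import Mathlib

set_option maxHeartbeats 1000000

open Finset
open scoped Classical
open Nat

namespace SymBollobas

variable {α : Type*} [Fintype α] [LinearOrder α]

def Srt {d N : ℕ} (Ur : Fin d → Finset α) (f : α ↪ Fin N) : Prop :=
  ∀ p q : Fin d, p < q → ∀ y z : α, y ∈ Ur p → z ∈ Ur q → f y < f z

def valAt {N : ℕ} (f : α ↪ Fin N) (y : α) : ℕ :=
  ((Finset.univ : Finset (Fin N)).filter fun t => t < f y ∧ ∀ z, f z ≠ t).card

def Vld {d N : ℕ} (Ur : Fin d → Finset α) (f : α ↪ Fin N) : Prop :=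
  ∀ (r : Fin d) (y : α), y ∈ Ur r → valAt f y = (r : ℕ)

lemma card_filter_coe_lt {N c : ℕ} (h : c ≤ N) :
    ((Finset.univ : Finset (Fin N)).filter fun t : Fin N => (t : ℕ) < c).card = c := by
  have : ((Finset.univ : Finset (Fin N)).filter fun t : Fin N => (t : ℕ) < c)
      = (Finset.range c).attachFin (fun m hm => lt_of_lt_of_le (Finset.mem_range.mp hm) h) := by
    ext t; simp [Finset.mem_attachFin]
  rw [this, Finset.card_attachFin, Finset.card_range]

section Insert

variable {d : ℕ} (Ur : Fin d → Finset α)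

/-- number of bars strictly before `y` -/
noncomputable def cnt (g : α ↪ Fin (Fintype.card α + 0)) (y : α) : ℕ :=
  ((Finset.univ : Finset (Fin (d - 1))).filter fun r : Fin (d - 1) =>
    ∀ z : α, (∃ r' : Fin d, (r' : ℕ) ≤ (r : ℕ) ∧ z ∈ Ur r') → g z < g y).card

lemma cnt_le (g : α ↪ Fin (Fintype.card α + 0)) (y : α) : cnt Ur g y ≤ d - 1 := by
  refine le_trans (Finset.card_filter_le _ _) ?_
  simp

lemma cnt_mono (g : α ↪ Fin (Fintype.card α + 0)) {y z : α} (h : g y < g z) :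
    cnt Ur g y ≤ cnt Ur g z := by
  apply Finset.card_le_card
  intro r hr
  simp only [Finset.mem_filter] at hr ⊢
  exact ⟨Finset.mem_univ _, fun w hw => lt_trans (hr.2 w hw) h⟩

/-- the insertion map -/
noncomputable def ins (g : α ↪ Fin (Fintype.card α + 0)) : α ↪ Fin (Fintype.card α + (d - 1)) where
  toFun y := ⟨(g y : ℕ) + cnt Ur g y,
    Nat.add_lt_add_of_lt_of_le (by simpa using (g y).isLt) (cnt_le Ur g y)⟩
  inj' := by
    intro y z h
    simp only [Fin.mk.injEq] at h
    rcases lt_trichotomy (g y) (g z) with hlt | heq | hgt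
    · have := cnt_mono Ur g hlt
      have : (g y : ℕ) + cnt Ur g y < (g z : ℕ) + cnt Ur g z :=
        Nat.add_lt_add_of_lt_of_le hlt this
      omega
    · exact g.injective heq
    · have := cnt_mono Ur g hgt
      have : (g z : ℕ) + cnt Ur g z < (g y : ℕ) + cnt Ur g y :=
        Nat.add_lt_add_of_lt_of_le hgt this
      omega

lemma ins_lt_iff (g : α ↪ Fin (Fintype.card α + 0)) (y z : α) :
    ins Ur g y < ins Ur g z ↔ g y < g z := by
  constructor
  · intro h
    rcases lt_trichotomy (g y) (g z) with hlt | heq | hgt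
    · exact hlt
    · rw [g.injective heq] at h; exact absurd h (lt_irrefl _)
    · have h2 : ins Ur g z < ins Ur g y := by
        simp only [ins, Function.Embedding.coeFn_mk, Fin.mk_lt_mk]
        exact Nat.add_lt_add_of_lt_of_le hgt (cnt_mono Ur g hgt)
      exact absurd (lt_trans h h2) (lt_irrefl _)
  · intro hlt
    simp only [ins, Function.Embedding.coeFn_mk, Fin.mk_lt_mk]
    exact Nat.add_lt_add_of_lt_of_le hlt (cnt_mono Ur g hlt)

lemma card_below {N : ℕ} (f : α ↪ Fin N) (hsurj : Function.Surjective f) (y : α) :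
    ((Finset.univ : Finset α).filter fun z => f z < f y).card = (f y : ℕ) := by
  rw [← card_filter_coe_lt (N := N) (c := (f y : ℕ)) (le_of_lt (f y).isLt)]
  apply Finset.card_bij (fun z _ => f z)
  · intro z hz
    simp only [Finset.mem_filter] at hz ⊢
    exact ⟨Finset.mem_univ _, hz.2⟩
  · intro z₁ _ z₂ _ h; exact f.injective h
  · intro t ht
    obtain ⟨z, rfl⟩ := hsurj t
    simp only [Finset.mem_filter] at ht
    exact ⟨z, Finset.mem_filter.mpr ⟨Finset.mem_univ _, ht.2⟩, rfl⟩

lemma g_surj (g : α ↪ Fin (Fintype.card α + 0)) : Function.Surjective g :=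
  ((Fintype.bijective_iff_injective_and_card ⇑g).mpr ⟨g.injective, by simp⟩).2

lemma card_below_ins (g : α ↪ Fin (Fintype.card α + 0)) (y : α) :
    ((Finset.univ : Finset α).filter fun z => ins Ur g z < ins Ur g y).card = (g y : ℕ) := by
  have : ((Finset.univ : Finset α).filter fun z => ins Ur g z < ins Ur g y)
      = ((Finset.univ : Finset α).filter fun z => g z < g y) := by
    ext z; simp [ins_lt_iff]
  rw [this, card_below g (g_surj g) y]

lemma valAt_ins (g : α ↪ Fin (Fintype.card α + 0)) (y : α) :
    valAt (ins Ur g) y = cnt Ur g y := by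
  set f := ins Ur g with hf
  have hcall : ((Finset.univ : Finset (Fin (Fintype.card α + (d - 1)))).filter
      fun t => t < f y).card = (g y : ℕ) + cnt Ur g y := by
    have h1 : ((Finset.univ : Finset (Fin (Fintype.card α + (d - 1)))).filter
        fun t => t < f y)
        = ((Finset.univ : Finset (Fin (Fintype.card α + (d - 1)))).filter
        fun t : Fin _ => (t : ℕ) < ((g y : ℕ) + cnt Ur g y)) := by
      ext t; simp [Fin.lt_def, hf, ins, -Fin.val_fin_lt]; exact Iff.rfl
    rw [h1, card_filter_coe_lt]
    have := (f y).isLt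
    simp only [hf, ins, Function.Embedding.coeFn_mk] at this
    exact le_of_lt this
  have hsplit : ((Finset.univ : Finset (Fin (Fintype.card α + (d - 1)))).filter
        fun t => t < f y ∧ ∀ z, f z ≠ t) ∪
      ((Finset.univ : Finset (Fin (Fintype.card α + (d - 1)))).filter
        fun t => t < f y ∧ ∃ z, f z = t)
      = ((Finset.univ : Finset (Fin (Fintype.card α + (d - 1)))).filter fun t => t < f y) := by
    ext t
    simp only [Finset.mem_union, Finset.mem_filter, Finset.mem_univ, true_and]
    constructor
    · rintro (⟨h, _⟩ | ⟨h, _⟩) <;> exact h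
    · intro h
      by_cases hz : ∃ z, f z = t
      · exact Or.inr ⟨h, hz⟩
      · push_neg at hz; exact Or.inl ⟨h, hz⟩
  have hdisj : Disjoint
      (((Finset.univ : Finset (Fin (Fintype.card α + (d - 1)))).filter
        fun t => t < f y ∧ ∀ z, f z ≠ t))
      (((Finset.univ : Finset (Fin (Fintype.card α + (d - 1)))).filter
        fun t => t < f y ∧ ∃ z, f z = t)) := by
    rw [Finset.disjoint_left]
    intro t h1 h2
    simp only [Finset.mem_filter] at h1 h2
    obtain ⟨z, hz⟩ := h2.2.2
    exact h1.2.2 z hz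
  have hhit : ((Finset.univ : Finset (Fin (Fintype.card α + (d - 1)))).filter
      fun t => t < f y ∧ ∃ z, f z = t).card
      = ((Finset.univ : Finset α).filter fun z => f z < f y).card := by
    symm
    apply Finset.card_bij (fun z _ => f z)
    · intro z hz
      simp only [Finset.mem_filter] at hz ⊢
      exact ⟨Finset.mem_univ _, hz.2, z, rfl⟩
    · intro z₁ _ z₂ _ h; exact f.injective h
    · intro t ht
      simp only [Finset.mem_filter] at ht
      obtain ⟨z, rfl⟩ := ht.2.2
      exact ⟨z, Finset.mem_filter.mpr ⟨Finset.mem_univ _, ht.2.1⟩, rfl⟩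
  have hcards := congrArg Finset.card hsplit
  rw [Finset.card_union_of_disjoint hdisj, hhit, hcall] at hcards
  have hbelow : ((Finset.univ : Finset α).filter fun z => f z < f y).card = (g y : ℕ) :=
    card_below_ins Ur g y
  rw [hbelow] at hcards
  unfold valAt
  omega

lemma cnt_eq (g : α ↪ Fin (Fintype.card α + 0)) (hg : Srt Ur g)
    {r₀ : Fin d} {y : α} (hy : y ∈ Ur r₀) : cnt Ur g y = (r₀ : ℕ) := by
  unfold cnt
  have : ((Finset.univ : Finset (Fin (d - 1))).filter fun r : Fin (d - 1) =>
      ∀ z : α, (∃ r' : Fin d, (r' : ℕ) ≤ (r : ℕ) ∧ z ∈ Ur r') → g z < g y)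
      = ((Finset.univ : Finset (Fin (d - 1))).filter fun r : Fin (d - 1) => (r : ℕ) < (r₀ : ℕ)) := by
    ext r
    simp only [Finset.mem_filter, Finset.mem_univ, true_and]
    constructor
    · intro hbar
      by_contra hge
      push_neg at hge
      exact absurd (hbar y ⟨r₀, hge, hy⟩) (lt_irrefl _)
    · rintro hr z ⟨r', hr'le, hz⟩
      exact hg r' r₀ (Fin.lt_def.mpr (lt_of_le_of_lt hr'le hr)) z y hz hy
  rw [this, card_filter_coe_lt (by omega : (r₀ : ℕ) ≤ d - 1)]

lemma insert_count :
    ((Finset.univ : Finset (α ↪ Fin (Fintype.card α + 0))).filter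
        fun f => Srt Ur f).card ≤
      ((Finset.univ : Finset (α ↪ Fin (Fintype.card α + (d - 1)))).filter
        fun f => Vld Ur f).card := by
  apply Finset.card_le_card_of_injOn (ins Ur)
  · intro g hg
    simp only [Finset.mem_coe, Finset.mem_filter, Finset.mem_univ, true_and] at hg ⊢
    intro r y hy
    rw [valAt_ins Ur g y, cnt_eq Ur g hg hy]
  · intro g₁ _ g₂ _ h
    ext y
    have h1 := card_below_ins Ur g₁ y
    have h2 := card_below_ins Ur g₂ y
    rw [h] at h1
    omega

end Insert


lemma vld_srt {d N : ℕ} {Ur : Fin d → Finset α} {f : α ↪ Fin N}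
    (h : Vld Ur f) : Srt Ur f := by
  intro p q hpq y z hy hz
  by_contra hlt
  push_neg at hlt
  have hmono : valAt f z ≤ valAt f y := by
    apply Finset.card_le_card
    intro t ht
    simp only [Finset.mem_filter] at ht ⊢
    exact ⟨Finset.mem_univ _, lt_of_lt_of_le ht.2.1 hlt, ht.2.2⟩
  rw [h p y hy, h q z hz] at hmono
  exact absurd (lt_of_le_of_lt hmono (Fin.lt_iff_val_lt_val.mp hpq)) (lt_irrefl _)


lemma order_uniq {β : Type*} [LinearOrder β] (S : Finset α) (f₁ f₂ : α → β)
    (him : S.image f₁ = S.image f₂)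
    (hinj₁ : Set.InjOn f₁ S) (hinj₂ : Set.InjOn f₂ S)
    (hcomp : ∀ y ∈ S, ∀ z ∈ S, (f₁ y < f₁ z ↔ f₂ y < f₂ z)) :
    ∀ y ∈ S, f₁ y = f₂ y := by
  classical
  intro y hy
  have key : ∀ (g₁ g₂ : α → β), S.image g₁ = S.image g₂ → Set.InjOn g₁ S → Set.InjOn g₂ S →
      (∀ y ∈ S, ∀ z ∈ S, (g₁ y < g₁ z ↔ g₂ y < g₂ z)) → ∀ y ∈ S, ¬ (g₁ y < g₂ y) := by
    intro g₁ g₂ him hinj₁ hinj₂ hcomp y hy hlt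
    -- ranks
    have h1 : ((S.image g₁).filter fun t => t < g₁ y) = (S.filter fun z => g₁ z < g₁ y).image g₁ := by
      ext t
      simp only [Finset.mem_filter, Finset.mem_image]
      constructor
      · rintro ⟨⟨z, hz, rfl⟩, ht⟩; exact ⟨z, ⟨hz, ht⟩, rfl⟩
      · rintro ⟨z, ⟨hz, ht⟩, rfl⟩; exact ⟨⟨z, hz, rfl⟩, ht⟩
    have h2 : ((S.image g₂).filter fun t => t < g₂ y) = (S.filter fun z => g₂ z < g₂ y).image g₂ := by
      ext t
      simp only [Finset.mem_filter, Finset.mem_image]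
      constructor
      · rintro ⟨⟨z, hz, rfl⟩, ht⟩; exact ⟨z, ⟨hz, ht⟩, rfl⟩
      · rintro ⟨z, ⟨hz, ht⟩, rfl⟩; exact ⟨⟨z, hz, rfl⟩, ht⟩
    have hfe : (S.filter fun z => g₁ z < g₁ y) = (S.filter fun z => g₂ z < g₂ y) := by
      ext z; simp only [Finset.mem_filter, and_congr_right_iff]
      intro hz; exact hcomp z hz y hy
    have hc1 : ((S.image g₁).filter fun t => t < g₁ y).card
        = ((S.image g₂).filter fun t => t < g₂ y).card := by
      rw [h1, h2, hfe, Finset.card_image_of_injOn (hinj₁.mono (Finset.filter_subset _ _)),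
        Finset.card_image_of_injOn (hinj₂.mono (Finset.filter_subset _ _))]
    rw [him] at hc1
    -- but strict subset
    have hss : ((S.image g₂).filter fun t => t < g₁ y) ⊂ ((S.image g₂).filter fun t => t < g₂ y) := by
      refine Finset.ssubset_iff_of_subset ?_ |>.mpr ?_
      · intro t ht
        simp only [Finset.mem_filter] at ht ⊢
        exact ⟨ht.1, lt_trans ht.2 hlt⟩
      · exact ⟨g₁ y, Finset.mem_filter.mpr ⟨him ▸ Finset.mem_image_of_mem g₁ hy, hlt⟩,
          fun hmem => absurd (Finset.mem_filter.mp hmem).2 (lt_irrefl _)⟩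
    exact absurd hc1 (_root_.ne_of_lt (Finset.card_lt_card hss))
  rcases lt_trichotomy (f₁ y) (f₂ y) with h | h | h
  · exact absurd h (key f₁ f₂ him hinj₁ hinj₂ hcomp y hy)
  · exact h
  · exact absurd h (key f₂ f₁ him.symm hinj₂ hinj₁ (fun y hy z hz => (hcomp y hy z hz).symm) y hy)

section SortedCount

variable {d b : ℕ} (Ur : Fin d → Finset α)
  (hdisj : ∀ p q : Fin d, p ≠ q → Disjoint (Ur p) (Ur q))

local notation "s" => Fintype.card α

private def U : Finset α := Finset.univ.biUnion Ur

private lemma mem_U {y : α} : y ∈ U Ur ↔ ∃ r, y ∈ Ur r := by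
  simp [U]

include hdisj in
private lemma part_unique {y : α} {r r' : Fin d} (h : y ∈ Ur r) (h' : y ∈ Ur r') : r = r' := by
  by_contra hne
  exact Finset.disjoint_left.mp (hdisj r r' hne) h h'

noncomputable def keyN (g : α ↪ Fin (s + b)) (y : α) : ℕ :=
  (if h : ∃ r : Fin d, y ∈ Ur r then ((h.choose : Fin d) : ℕ) else 0) * (s + b) + (g y : ℕ)

include hdisj in
private lemma keyN_eq (g : α ↪ Fin (s + b)) {y : α} {r : Fin d} (hy : y ∈ Ur r) :
    keyN Ur g y = (r : ℕ) * (s + b) + (g y : ℕ) := by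
  have h : ∃ r : Fin d, y ∈ Ur r := ⟨r, hy⟩
  have : h.choose = r := part_unique Ur hdisj h.choose_spec hy
  rw [keyN, dif_pos h, this]

private lemma keyN_injOn (g : α ↪ Fin (s + b)) :
    Set.InjOn (keyN Ur g) (U Ur) := by
  intro y hy z hz h
  apply g.injective
  have h1 : (g y : ℕ) < s + b := (g y).isLt
  have h2 : (g z : ℕ) < s + b := (g z).isLt
  apply Fin.ext
  have e1 : ((if h : ∃ r : Fin d, y ∈ Ur r then ((h.choose : Fin d) : ℕ) else 0) * (s + b)
      + (g y : ℕ)) % (s + b) = (g y : ℕ) := by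
    rw [Nat.add_comm, Nat.add_mul_mod_self_right]; exact Nat.mod_eq_of_lt h1
  have e2 : ((if h : ∃ r : Fin d, z ∈ Ur r then ((h.choose : Fin d) : ℕ) else 0) * (s + b)
      + (g z : ℕ)) % (s + b) = (g z : ℕ) := by
    rw [Nat.add_comm, Nat.add_mul_mod_self_right]; exact Nat.mod_eq_of_lt h2
  unfold keyN at h
  rw [← e1, ← e2, h]

private lemma P_card (g : α ↪ Fin (s + b)) : ((U Ur).image g).card = (U Ur).card :=
  Finset.card_image_of_injective _ g.injective

private lemma K_card (g : α ↪ Fin (s + b)) : ((U Ur).image (keyN Ur g)).card = (U Ur).card :=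
  Finset.card_image_of_injOn (keyN_injOn Ur g)

noncomputable def sortify (g : α ↪ Fin (s + b)) (y : α) : Fin (s + b) :=
  if h : y ∈ U Ur then
    ((((U Ur).image g).orderIsoOfFin (P_card Ur g))
      (((((U Ur).image (keyN Ur g)).orderIsoOfFin (K_card Ur g)).symm)
        ⟨keyN Ur g y, Finset.mem_image_of_mem _ h⟩) : Fin (s + b))
  else g y

private lemma sortify_off (g : α ↪ Fin (s + b)) {y : α} (h : y ∉ U Ur) :
    sortify Ur g y = g y := dif_neg h

private lemma sortify_mem (g : α ↪ Fin (s + b)) {y : α} (h : y ∈ U Ur) :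
    sortify Ur g y ∈ (U Ur).image g := by
  rw [sortify, dif_pos h]
  exact Finset.coe_mem _

private lemma smono (g : α ↪ Fin (s + b)) {y z : α} (hy : y ∈ U Ur) (hz : z ∈ U Ur) :
    (sortify Ur g y < sortify Ur g z ↔ keyN Ur g y < keyN Ur g z) := by
  rw [sortify, dif_pos hy, sortify, dif_pos hz]
  rw [Subtype.coe_lt_coe, OrderIso.lt_iff_lt, OrderIso.lt_iff_lt, Subtype.mk_lt_mk]

private lemma sortify_inj (g : α ↪ Fin (s + b)) : Function.Injective (sortify Ur g) := by
  intro y z h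
  by_cases hy : y ∈ U Ur <;> by_cases hz : z ∈ U Ur
  · have h1 : ¬ keyN Ur g y < keyN Ur g z := by
      rw [← smono Ur g hy hz, h]; exact lt_irrefl _
    have h2 : ¬ keyN Ur g z < keyN Ur g y := by
      rw [← smono Ur g hz hy, h]; exact lt_irrefl _
    exact keyN_injOn Ur g hy hz (le_antisymm (not_lt.mp h2) (not_lt.mp h1))
  · exfalso
    have := sortify_mem Ur g hy
    rw [h, sortify_off Ur g hz] at this
    obtain ⟨u, hu, hgu⟩ := Finset.mem_image.mp this
    exact hz (g.injective hgu ▸ hu)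
  · exfalso
    have := sortify_mem Ur g hz
    rw [← h, sortify_off Ur g hy] at this
    obtain ⟨u, hu, hgu⟩ := Finset.mem_image.mp this
    exact hy (g.injective hgu ▸ hu)
  · rw [sortify_off Ur g hy, sortify_off Ur g hz] at h
    exact g.injective h

noncomputable def sortifyEmb (g : α ↪ Fin (s + b)) : α ↪ Fin (s + b) :=
  ⟨sortify Ur g, sortify_inj Ur g⟩

private lemma sortify_image (g : α ↪ Fin (s + b)) :
    (U Ur).image (sortify Ur g) = (U Ur).image g := by
  apply Finset.eq_of_subset_of_card_le
  · intro t ht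
    obtain ⟨y, hy, rfl⟩ := Finset.mem_image.mp ht
    exact sortify_mem Ur g hy
  · rw [P_card Ur g, Finset.card_image_of_injective _ (sortify_inj Ur g)]

include hdisj in
private lemma sortify_sorted (g : α ↪ Fin (s + b)) : Srt Ur (sortifyEmb Ur g) := by
  intro p q hpq y z hy hz
  have hyU : y ∈ U Ur := mem_U Ur |>.mpr ⟨p, hy⟩
  have hzU : z ∈ U Ur := mem_U Ur |>.mpr ⟨q, hz⟩
  show sortify Ur g y < sortify Ur g z
  rw [smono Ur g hyU hzU, keyN_eq Ur hdisj g hy, keyN_eq Ur hdisj g hz]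
  have h1 : (g y : ℕ) < s + b := (g y).isLt
  have h2 : ((p : ℕ) + 1) * (s + b) ≤ (q : ℕ) * (s + b) :=
    Nat.mul_le_mul_right _ (Nat.succ_le_of_lt hpq)
  calc (p : ℕ) * (s + b) + (g y : ℕ) < (p : ℕ) * (s + b) + (s + b) :=
        Nat.add_lt_add_left h1 _
    _ = ((p : ℕ) + 1) * (s + b) := by ring
    _ ≤ (q : ℕ) * (s + b) := h2
    _ ≤ (q : ℕ) * (s + b) + (g z : ℕ) := Nat.le_add_right _ _

include hdisj in
private lemma sortify_within (g : α ↪ Fin (s + b)) {r : Fin d} {y z : α}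
    (hy : y ∈ Ur r) (hz : z ∈ Ur r) :
    (sortify Ur g y < sortify Ur g z ↔ g y < g z) := by
  rw [smono Ur g (mem_U Ur |>.mpr ⟨r, hy⟩) (mem_U Ur |>.mpr ⟨r, hz⟩),
    keyN_eq Ur hdisj g hy, keyN_eq Ur hdisj g hz]
  rw [add_lt_add_iff_left]
  exact Fin.lt_def.symm

section Fiber

noncomputable def partR (y : ↥(U Ur)) : Fin d := ((mem_U Ur).mp y.2).choose

private lemma partR_spec (y : ↥(U Ur)) : (y : α) ∈ Ur (partR Ur y) :=
  ((mem_U Ur).mp y.2).choose_spec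

include hdisj in
private lemma partR_eq (y : ↥(U Ur)) {r : Fin d} (h : (y : α) ∈ Ur r) : partR Ur y = r :=
  part_unique Ur hdisj (partR_spec Ur y) h

noncomputable def swz (σ : ∀ r : Fin d, Equiv.Perm ↥(Ur r)) (y : ↥(U Ur)) : α :=
  ↑(σ (partR Ur y) ⟨↑y, partR_spec Ur y⟩)

include hdisj in
private lemma swz_eq (σ : ∀ r : Fin d, Equiv.Perm ↥(Ur r)) (y : ↥(U Ur)) {r : Fin d}
    (hr : (y : α) ∈ Ur r) : swz Ur σ y = ↑(σ r ⟨↑y, hr⟩) := by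
  have h := partR_eq Ur hdisj y hr
  subst h
  rfl

private lemma swz_mem_part (σ : ∀ r : Fin d, Equiv.Perm ↥(Ur r)) (y : ↥(U Ur)) :
    swz Ur σ y ∈ Ur (partR Ur y) := Finset.coe_mem _

private lemma swz_memU (σ : ∀ r : Fin d, Equiv.Perm ↥(Ur r)) (y : ↥(U Ur)) :
    swz Ur σ y ∈ U Ur := (mem_U Ur).mpr ⟨_, swz_mem_part Ur σ y⟩

variable (g' : α ↪ Fin (Fintype.card α + b))

private lemma emb_nonempty : Nonempty (↥(U Ur) ↪ ↥((U Ur).image ⇑g')) := by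
  apply Function.Embedding.nonempty_of_card_le
  rw [Fintype.card_coe, Fintype.card_coe, P_card]

include hdisj in
private lemma phi_inj (g : α ↪ Fin (s + b)) (σ : ∀ r : Fin d, Equiv.Perm ↥(Ur r))
    (h : (U Ur).image ⇑g = (U Ur).image ⇑g') :
    Function.Injective (fun y : ↥(U Ur) =>
      (⟨g (swz Ur σ y), by rw [← h]; exact Finset.mem_image_of_mem _ (swz_memU Ur σ y)⟩ :
        ↥((U Ur).image ⇑g'))) := by
  intro y₁ y₂ heq
  have heq' : g (swz Ur σ y₁) = g (swz Ur σ y₂) := congrArg Subtype.val heq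
  have hsw : swz Ur σ y₁ = swz Ur σ y₂ := g.injective heq'
  have m2 : swz Ur σ y₁ ∈ Ur (partR Ur y₂) := by
    rw [hsw]; exact swz_mem_part Ur σ y₂
  have hr : partR Ur y₁ = partR Ur y₂ :=
    part_unique Ur hdisj (swz_mem_part Ur σ y₁) m2
  have hy1r : (y₁ : α) ∈ Ur (partR Ur y₂) := hr ▸ partR_spec Ur y₁
  have e1 : swz Ur σ y₁ = ↑(σ (partR Ur y₂) ⟨↑y₁, hy1r⟩) := swz_eq Ur hdisj σ y₁ hy1r
  have e2 : swz Ur σ y₂ = ↑(σ (partR Ur y₂) ⟨↑y₂, partR_spec Ur y₂⟩) :=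
    swz_eq Ur hdisj σ y₂ (partR_spec Ur y₂)
  have h3 : σ (partR Ur y₂) ⟨↑y₁, hy1r⟩ = σ (partR Ur y₂) ⟨↑y₂, partR_spec Ur y₂⟩ :=
    Subtype.ext (by rw [← e1, ← e2]; exact hsw)
  have h4 := (σ (partR Ur y₂)).injective h3
  exact Subtype.ext (Subtype.mk_eq_mk.mp h4)

noncomputable def Phi (gσ : (α ↪ Fin (s + b)) × (∀ r : Fin d, Equiv.Perm ↥(Ur r))) :
    ↥(U Ur) ↪ ↥((U Ur).image ⇑g') :=
  if h : (U Ur).image ⇑gσ.1 = (U Ur).image ⇑g' then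
    ⟨_, phi_inj Ur hdisj g' gσ.1 gσ.2 h⟩
  else Classical.choice (emb_nonempty Ur g')

include hdisj in
private lemma fiber_card :
    ((Finset.univ : Finset (α ↪ Fin (s + b))).filter
        fun g => sortifyEmb Ur g = g').card * ∏ r : Fin d, ((Ur r).card)! ≤
      ((U Ur).card)! := by
  classical
  have himg : ∀ g : α ↪ Fin (s + b), sortifyEmb Ur g = g' →
      (U Ur).image ⇑g = (U Ur).image ⇑g' := by
    intro g hg
    rw [← hg]
    exact (sortify_image Ur g).symm
  have hTcard : (Finset.univ : Finset (↥(U Ur) ↪ ↥((U Ur).image ⇑g'))).card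
      = ((U Ur).card)! := by
    rw [Finset.card_univ, Fintype.card_embedding_eq, Fintype.card_coe, Fintype.card_coe,
      P_card]
    exact Nat.descFactorial_self _
  have hdom : (((Finset.univ : Finset (α ↪ Fin (s + b))).filter
        fun g => sortifyEmb Ur g = g') ×ˢ
      (Fintype.piFinset fun r : Fin d => (Finset.univ : Finset (Equiv.Perm ↥(Ur r))))).card
      = ((Finset.univ : Finset (α ↪ Fin (s + b))).filter
        fun g => sortifyEmb Ur g = g').card * ∏ r : Fin d, ((Ur r).card)! := by
    rw [Finset.card_product, Fintype.card_piFinset]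
    congr 1
    refine Finset.prod_congr rfl fun r _ => ?_
    rw [Finset.card_univ, Fintype.card_perm, Fintype.card_coe]
  rw [← hdom, ← hTcard]
  apply Finset.card_le_card_of_injOn (Phi Ur hdisj g')
  · intro _ _; exact Finset.mem_univ _
  · rintro ⟨g₁, σ₁⟩ hm₁ ⟨g₂, σ₂⟩ hm₂ heq
    simp only [Finset.mem_coe, Finset.mem_product, Finset.mem_filter] at hm₁ hm₂
    have hg₁ : sortifyEmb Ur g₁ = g' := hm₁.1.2
    have hg₂ : sortifyEmb Ur g₂ = g' := hm₂.1.2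
    have h₁ := himg g₁ hg₁
    have h₂ := himg g₂ hg₂
    rw [Phi, dif_pos h₁, Phi, dif_pos h₂] at heq
    have hval : ∀ y : ↥(U Ur), g₁ (swz Ur σ₁ y) = g₂ (swz Ur σ₂ y) := by
      intro y
      have := congrFun (congrArg (fun (f : ↥(U Ur) ↪ ↥((U Ur).image ⇑g')) => (⇑f : ↥(U Ur) → ↥((U Ur).image ⇑g'))) heq) y
      simpa [Subtype.ext_iff] using this
    have hpart : ∀ (r : Fin d) (w : ↥(Ur r)), g₁ ↑(σ₁ r w) = g₂ ↑(σ₂ r w) := by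
      intro r w
      have hyU : (w : α) ∈ U Ur := (mem_U Ur).mpr ⟨r, w.2⟩
      have := hval ⟨↑w, hyU⟩
      rwa [swz_eq Ur hdisj σ₁ ⟨↑w, hyU⟩ w.2, swz_eq Ur hdisj σ₂ ⟨↑w, hyU⟩ w.2] at this
    -- g₁ = g₂ on each part
    have hgeq : ∀ (r : Fin d), ∀ y ∈ Ur r, g₁ y = g₂ y := by
      intro r
      apply order_uniq (Ur r) ⇑g₁ ⇑g₂
      · ext t
        simp only [Finset.mem_image]
        constructor
        · rintro ⟨u, hu, rfl⟩
          refine ⟨↑(σ₂ r ((σ₁ r).symm ⟨u, hu⟩)), (σ₂ r _).2, ?_⟩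
          rw [← hpart r ((σ₁ r).symm ⟨u, hu⟩), Equiv.apply_symm_apply]
        · rintro ⟨u, hu, rfl⟩
          refine ⟨↑(σ₁ r ((σ₂ r).symm ⟨u, hu⟩)), (σ₁ r _).2, ?_⟩
          rw [hpart r ((σ₂ r).symm ⟨u, hu⟩), Equiv.apply_symm_apply]
      · exact fun y _ z _ h => g₁.injective h
      · exact fun y _ z _ h => g₂.injective h
      · intro y hy z hz
        rw [← sortify_within Ur hdisj g₁ hy hz, ← sortify_within Ur hdisj g₂ hy hz]
        show sortifyEmb Ur g₁ y < sortifyEmb Ur g₁ z ↔ sortifyEmb Ur g₂ y < sortifyEmb Ur g₂ z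
        rw [hg₁, hg₂]
    have hgall : g₁ = g₂ := by
      ext y
      rcases Classical.em (y ∈ U Ur) with hy | hy
      · obtain ⟨r, hr⟩ := (mem_U Ur).mp hy
        exact congrArg Fin.val (hgeq r y hr)
      · have e1 : g₁ y = sortifyEmb Ur g₁ y := (sortify_off Ur g₁ hy).symm
        have e2 : g₂ y = sortifyEmb Ur g₂ y := (sortify_off Ur g₂ hy).symm
        rw [e1, e2, hg₁, hg₂]
    subst hgall
    have hσ : σ₁ = σ₂ := by
      funext r
      apply Equiv.ext
      intro w
      exact Subtype.ext (g₁.injective (hpart r w))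
    rw [hσ]

end Fiber


include hdisj in
lemma sorted_count :
    (s + b).descFactorial s ≤
      Nat.multinomial Finset.univ (fun r => (Ur r).card) *
        ((Finset.univ : Finset (α ↪ Fin (s + b))).filter fun f => Srt Ur f).card := by
  classical
  have hacard : (U Ur).card = ∑ r : Fin d, (Ur r).card :=
    Finset.card_biUnion fun x _ y _ hxy => hdisj x y hxy
  have hBpos : 0 < ∏ r : Fin d, ((Ur r).card)! :=
    Finset.prod_pos fun r _ => Nat.factorial_pos _
  have hfib : ∀ g' ∈ (Finset.univ : Finset (α ↪ Fin (s + b))).image (sortifyEmb Ur),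
      ((Finset.univ : Finset (α ↪ Fin (s + b))).filter
        fun g => sortifyEmb Ur g = g').card ≤
        Nat.multinomial Finset.univ (fun r => (Ur r).card) := by
    intro g' _
    have h1 := fiber_card Ur hdisj g'
    rw [hacard, ← Nat.multinomial_spec] at h1
    rw [Nat.mul_comm] at h1
    exact Nat.le_of_mul_le_mul_left h1 hBpos
  have htot : ((Finset.univ : Finset (α ↪ Fin (s + b)))).card
      = (s + b).descFactorial s := by
    rw [Finset.card_univ, Fintype.card_embedding_eq, Fintype.card_fin]
  have hsum := Finset.card_eq_sum_card_fiberwise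
    (fun (g : α ↪ Fin (Fintype.card α + b)) (_ : g ∈ Finset.univ) =>
      Finset.mem_image_of_mem (sortifyEmb Ur) (Finset.mem_univ g))
  rw [htot] at hsum
  rw [hsum]
  calc ∑ g' ∈ (Finset.univ : Finset (α ↪ Fin (s + b))).image (sortifyEmb Ur),
        ((Finset.univ : Finset (α ↪ Fin (s + b))).filter
          fun g => sortifyEmb Ur g = g').card
      ≤ ∑ _g' ∈ (Finset.univ : Finset (α ↪ Fin (s + b))).image (sortifyEmb Ur),
        Nat.multinomial Finset.univ (fun r => (Ur r).card) := Finset.sum_le_sum hfib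
    _ = ((Finset.univ : Finset (α ↪ Fin (s + b))).image (sortifyEmb Ur)).card *
        Nat.multinomial Finset.univ (fun r => (Ur r).card) := by
        rw [Finset.sum_const, smul_eq_mul]
    _ ≤ ((Finset.univ : Finset (α ↪ Fin (s + b))).filter fun f => Srt Ur f).card *
        Nat.multinomial Finset.univ (fun r => (Ur r).card) := by
        apply Nat.mul_le_mul_right
        apply Finset.card_le_card
        intro g' hg'
        obtain ⟨g, _, rfl⟩ := Finset.mem_image.mp hg'
        exact Finset.mem_filter.mpr ⟨Finset.mem_univ _, sortify_sorted Ur hdisj g⟩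
    _ = Nat.multinomial Finset.univ (fun r => (Ur r).card) *
        ((Finset.univ : Finset (α ↪ Fin (s + b))).filter fun f => Srt Ur f).card :=
        Nat.mul_comm _ _

end SortedCount

lemma block_vld {d : ℕ} (Ur : Fin d → Finset α)
    (hdisj : ∀ p q : Fin d, p ≠ q → Disjoint (Ur p) (Ur q)) :
    (Fintype.card α + (d - 1)).descFactorial (Fintype.card α) ≤
      (Fintype.card α + (d - 1)).choose (d - 1) *
        (Nat.multinomial Finset.univ (fun r => (Ur r).card) *
        ((Finset.univ : Finset (α ↪ Fin (Fintype.card α + (d - 1)))).filter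
          fun f => Vld Ur f).card) := by
  have h0 := sorted_count (b := 0) Ur hdisj
  rw [Nat.add_zero, Nat.descFactorial_self] at h0
  have h1 := insert_count Ur
  have hdesc : (Fintype.card α + (d - 1)).descFactorial (Fintype.card α)
      = (Fintype.card α + (d - 1)).choose (d - 1) * (Fintype.card α)! := by
    have hle : Fintype.card α ≤ Fintype.card α + (d - 1) := Nat.le_add_right _ _
    have e1 := Nat.factorial_mul_descFactorial hle
    have e2 := Nat.choose_mul_factorial_mul_factorial hle
    have e3 : Fintype.card α + (d - 1) - Fintype.card α = d - 1 := by omega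
    rw [e3] at e1 e2
    have e4 : (Fintype.card α + (d - 1)).choose (Fintype.card α)
        = (Fintype.card α + (d - 1)).choose (d - 1) := by
      rw [← Nat.choose_symm hle, e3]
    rw [e4] at e2
    have hfd : 0 < (d - 1)! := Nat.factorial_pos _
    apply Nat.eq_of_mul_eq_mul_left hfd
    rw [e1, ← e2]
    ring
  calc (Fintype.card α + (d - 1)).descFactorial (Fintype.card α)
      = (Fintype.card α + (d - 1)).choose (d - 1) * (Fintype.card α)! := hdesc
    _ ≤ (Fintype.card α + (d - 1)).choose (d - 1) *
        (Nat.multinomial Finset.univ (fun r => (Ur r).card) *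
          ((Finset.univ : Finset (α ↪ Fin (Fintype.card α + 0))).filter
            fun f => Srt Ur f).card) := Nat.mul_le_mul_left _ h0
    _ ≤ _ := by
      apply Nat.mul_le_mul_left
      apply Nat.mul_le_mul_left
      exact h1


section Main

variable (n d e m : ℕ) (X : Fin e → Finset ℕ) (A : Fin m → Fin d → Finset ℕ)

private lemma key_lemma (hd : 2 ≤ d)
    (hXcover : Finset.univ.biUnion X = Finset.Icc 1 n)
    (hAsub : ∀ i r, A i r ⊆ Finset.Icc 1 n)
    (hAdisj : ∀ i, ∀ p q : Fin d, p ≠ q → Disjoint (A i p) (A i q))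
    (hsymm : ∀ i j : Fin m, i < j →
      ∃ p q : Fin d, p < q ∧
        ((A i p) ∩ (A j q)).Nonempty ∧ ((A j p) ∩ (A i q)).Nonempty)
    (l : Fin e) :
    ∑ i : Fin m, (∏ k : Fin e,
        ((Nat.multinomial Finset.univ
          fun r : Fin d => ((A i r) ∩ X k).card : ℕ) : ℚ))⁻¹
      ≤ (∏ k : Fin e,
              ((((X k ∩ (Finset.univ.biUnion fun i : Fin m =>
                    Finset.univ.biUnion fun r : Fin d => A i r)).card
                  + d - 1).choose (d - 1) : ℕ) : ℚ)) /
            ((((X l ∩ (Finset.univ.biUnion fun i : Fin m =>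
                  Finset.univ.biUnion fun r : Fin d => A i r)).card
                + d - 1).choose (d - 1) : ℕ) : ℚ) := by
  classical
  set S : Finset ℕ := Finset.univ.biUnion (fun i : Fin m =>
    Finset.univ.biUnion fun r : Fin d => A i r) with hSdef
  -- the blocks
  set Y : Fin e → Finset ℕ := fun k => X k ∩ S with hYdef
  -- membership in S
  have hmemS : ∀ (x : ℕ) (i : Fin m) (r : Fin d), x ∈ A i r → x ∈ S := by
    intro x i r hx
    rw [hSdef]
    exact Finset.mem_biUnion.mpr ⟨i, Finset.mem_univ _,
      Finset.mem_biUnion.mpr ⟨r, Finset.mem_univ _, hx⟩⟩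
  -- parts inside blocks
  set Uik : (i : Fin m) → (k : Fin e) → Fin d → Finset ↥(Y k) :=
    fun i k r => Finset.univ.filter (fun y => (y : ℕ) ∈ A i r) with hUikdef
  have hUdisj : ∀ i k, ∀ p q : Fin d, p ≠ q → Disjoint (Uik i k p) (Uik i k q) := by
    intro i k p q hpq
    rw [Finset.disjoint_left]
    intro y hy hy'
    rw [hUikdef] at hy hy'
    simp only [Finset.mem_filter] at hy hy'
    exact Finset.disjoint_left.mp (hAdisj i p q hpq) hy.2 hy'.2
  have hUcard : ∀ i k r, (Uik i k r).card = (A i r ∩ X k).card := by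
    intro i k r
    apply Finset.card_bij (fun (y : ↥(Y k)) _ => (y : ℕ))
    · intro y hy
      rw [hUikdef] at hy
      simp only [Finset.mem_filter] at hy
      have hyY : (y : ℕ) ∈ X k ∩ S := y.2
      exact Finset.mem_inter.mpr ⟨hy.2, (Finset.mem_inter.mp hyY).1⟩
    · intro y _ z _ h
      exact Subtype.ext h
    · intro x hx
      rw [Finset.mem_inter] at hx
      have hxY : x ∈ Y k := Finset.mem_inter.mpr ⟨hx.2, hmemS x i r hx.1⟩
      refine ⟨⟨x, hxY⟩, ?_, rfl⟩
      rw [hUikdef]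
      exact Finset.mem_filter.mpr ⟨Finset.mem_univ _, hx.1⟩
  set Mult : Fin m → Fin e → ℕ :=
    fun i k => Nat.multinomial Finset.univ (fun r => (A i r ∩ X k).card) with hMultdef
  have hmult_eq : ∀ i k,
      Nat.multinomial Finset.univ (fun r => (Uik i k r).card) = Mult i k := by
    intro i k
    rw [hMultdef]
    congr 1
    funext r
    exact hUcard i k r
  -- the events
  set F : (i : Fin m) → (k : Fin e) →
      Finset (↥(Y k) ↪ Fin (Fintype.card ↥(Y k) + (d - 1))) :=
    fun i k => Finset.univ.filter
      (fun f => Srt (Uik i k) f ∧ (k ≠ l → Vld (Uik i k) f)) with hFdef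
  set E : Fin m → Finset (∀ k : Fin e, ↥(Y k) ↪ Fin (Fintype.card ↥(Y k) + (d - 1))) :=
    fun i => Fintype.piFinset (F i) with hEdef
  set Nk : Fin e → ℕ :=
    fun k => (Fintype.card ↥(Y k) + (d - 1)).descFactorial (Fintype.card ↥(Y k)) with hNkdef
  set Ck : Fin e → ℕ :=
    fun k => (Fintype.card ↥(Y k) + (d - 1)).choose (d - 1) with hCkdef
  -- per-block bounds
  have hFl : ∀ i, Nk l ≤ Mult i l * (F i l).card := by
    intro i
    have h := sorted_count (b := d - 1) (Uik i l) (hUdisj i l)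
    rw [hmult_eq] at h
    refine le_trans h (Nat.mul_le_mul_left _ (Finset.card_le_card ?_))
    intro f hf
    rw [Finset.mem_filter] at hf
    rw [hFdef]
    exact Finset.mem_filter.mpr ⟨Finset.mem_univ _, hf.2, fun hne => absurd rfl hne⟩
  have hFk : ∀ i k, k ≠ l → Nk k ≤ Ck k * (Mult i k * (F i k).card) := by
    intro i k hk
    have h := block_vld (Uik i k) (hUdisj i k)
    rw [hmult_eq] at h
    refine le_trans h (Nat.mul_le_mul_left _ (Nat.mul_le_mul_left _
      (Finset.card_le_card ?_)))
    intro f hf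
    rw [Finset.mem_filter] at hf
    rw [hFdef]
    exact Finset.mem_filter.mpr ⟨Finset.mem_univ _, vld_srt hf.2, fun _ => hf.2⟩
  -- disjointness of events
  have conflict : ∀ i j : Fin m, i < j →
      ∀ ω : (∀ k : Fin e, ↥(Y k) ↪ Fin (Fintype.card ↥(Y k) + (d - 1))),
      ω ∈ E i → ω ∈ E j → False := by
    intro i j hij ω hi hj
    rw [hEdef] at hi hj
    rw [Fintype.mem_piFinset] at hi hj
    obtain ⟨p, q, hpq, ⟨x, hx⟩, ⟨y, hy⟩⟩ := hsymm i j hij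
    rw [Finset.mem_inter] at hx hy
    -- locate x and y in blocks
    have hxIcc : x ∈ Finset.Icc 1 n := hAsub i p hx.1
    rw [← hXcover] at hxIcc
    obtain ⟨kx, _, hxX⟩ := Finset.mem_biUnion.mp hxIcc
    have hxY : x ∈ Y kx := Finset.mem_inter.mpr ⟨hxX, hmemS x i p hx.1⟩
    have hyIcc : y ∈ Finset.Icc 1 n := hAsub j p hy.1
    rw [← hXcover] at hyIcc
    obtain ⟨ky, _, hyX⟩ := Finset.mem_biUnion.mp hyIcc
    have hyY : y ∈ Y ky := Finset.mem_inter.mpr ⟨hyX, hmemS y j p hy.1⟩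
    have hiF : ∀ k, Srt (Uik i k) (ω k) ∧ (k ≠ l → Vld (Uik i k) (ω k)) := by
      intro k; have := hi k; rw [hFdef] at this
      exact (Finset.mem_filter.mp this).2
    have hjF : ∀ k, Srt (Uik j k) (ω k) ∧ (k ≠ l → Vld (Uik j k) (ω k)) := by
      intro k; have := hj k; rw [hFdef] at this
      exact (Finset.mem_filter.mp this).2
    have hmemU : ∀ (i' : Fin m) (r : Fin d) (k : Fin e) (z : ℕ) (hz : z ∈ Y k),
        z ∈ A i' r → (⟨z, hz⟩ : ↥(Y k)) ∈ Uik i' k r := by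
      intro i' r k z hz h
      rw [hUikdef]
      exact Finset.mem_filter.mpr ⟨Finset.mem_univ _, h⟩
    by_cases hkx : kx = l
    · by_cases hky : ky = l
      · have hxYl : x ∈ Y l := hkx ▸ hxY
        have hyYl : y ∈ Y l := hky ▸ hyY
        have h1 := (hiF l).1 p q hpq ⟨x, hxYl⟩ ⟨y, hyYl⟩
          (hmemU i p l x hxYl hx.1) (hmemU i q l y hyYl hy.2)
        have h2 := (hjF l).1 p q hpq ⟨y, hyYl⟩ ⟨x, hxYl⟩
          (hmemU j p l y hyYl hy.1) (hmemU j q l x hxYl hx.2)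
        exact lt_asymm h1 h2
      · -- ky ≠ l : two values at y
        have hv1 := (hiF ky).2 hky q ⟨y, hyY⟩ (hmemU i q ky y hyY hy.2)
        have hv2 := (hjF ky).2 hky p ⟨y, hyY⟩ (hmemU j p ky y hyY hy.1)
        have : (p : ℕ) = (q : ℕ) := by rw [← hv2, hv1]
        have := Fin.lt_def.mp hpq
        omega
    · have hv1 := (hiF kx).2 hkx p ⟨x, hxY⟩ (hmemU i p kx x hxY hx.1)
      have hv2 := (hjF kx).2 hkx q ⟨x, hxY⟩ (hmemU j q kx x hxY hx.2)
      have : (p : ℕ) = (q : ℕ) := by rw [← hv1, hv2]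
      have := Fin.lt_def.mp hpq
      omega
  have hdisjE : ∀ i j : Fin m, i ≠ j → Disjoint (E i) (E j) := by
    intro i j hij
    rw [Finset.disjoint_left]
    intro ω hi hj
    rcases lt_trichotomy i j with h | h | h
    · exact conflict i j h ω hi hj
    · exact hij h
    · exact conflict j i h ω hj hi
  -- counting
  have hsum : ∑ i : Fin m, (E i).card ≤ ∏ k : Fin e, Nk k := by
    rw [← Finset.card_biUnion (fun i _ j _ hij => hdisjE i j hij)]
    refine le_trans (Finset.card_le_univ _) (le_of_eq ?_)
    rw [Fintype.card_pi]
    refine Finset.prod_congr rfl fun k _ => ?_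
    rw [Fintype.card_embedding_eq, Fintype.card_fin, hNkdef]
  have hEcard : ∀ i, (E i).card = ∏ k : Fin e, (F i k).card := by
    intro i; rw [hEdef]; exact Fintype.card_piFinset _
  -- per-i bound
  have hprod : ∀ i : Fin m, (∏ k : Fin e, Nk k) ≤
      ((∏ k : Fin e, Mult i k) * (∏ k : Fin e, (if k = l then 1 else Ck k)))
        * (E i).card := by
    intro i
    have step : ∀ k : Fin e, Nk k ≤
        (Mult i k * (if k = l then 1 else Ck k)) * (F i k).card := by
      intro k
      by_cases hk : k = l
      · subst hk
        rw [if_pos rfl, Nat.mul_one]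
        exact hFl i
      · rw [if_neg hk]
        calc Nk k ≤ Ck k * (Mult i k * (F i k).card) := hFk i k hk
          _ = Mult i k * Ck k * (F i k).card := by ring
    calc ∏ k : Fin e, Nk k
        ≤ ∏ k : Fin e, ((Mult i k * (if k = l then 1 else Ck k)) * (F i k).card) :=
          Finset.prod_le_prod' fun k _ => step k
      _ = ((∏ k : Fin e, Mult i k) * (∏ k : Fin e, (if k = l then 1 else Ck k)))
          * (E i).card := by
          rw [hEcard i, ← Finset.prod_mul_distrib, ← Finset.prod_mul_distrib]
  -- positivity
  have hNkpos : ∀ k, 0 < Nk k := by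
    intro k
    apply Nat.pos_of_ne_zero
    intro h0
    simp only [hNkdef] at h0
    have hfac := Nat.factorial_mul_descFactorial
      (Nat.le_add_right (Fintype.card ↥(Y k)) (d - 1))
    rw [h0, Nat.mul_zero] at hfac
    exact (Nat.factorial_ne_zero _) hfac.symm
  -- endgame over ℚ
  set CP : ℕ := ∏ k : Fin e, (if k = l then 1 else Ck k) with hCPdef
  have hCLCP : Ck l * CP = ∏ k : Fin e, Ck k := by
    rw [← Finset.mul_prod_erase Finset.univ Ck (Finset.mem_univ l)]
    congr 1
    rw [hCPdef, ← Finset.mul_prod_erase Finset.univ _ (Finset.mem_univ l), if_pos rfl,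
      one_mul]
    exact Finset.prod_congr rfl fun k hk => if_neg (Finset.ne_of_mem_erase hk)
  have hNpos : (0 : ℚ) < ((∏ k : Fin e, Nk k : ℕ) : ℚ) := by
    exact_mod_cast Finset.prod_pos fun k _ => hNkpos k
  have hCkpos : ∀ k, 0 < Ck k := by
    intro k
    rw [hCkdef]
    exact Nat.choose_pos (Nat.le_add_left _ _)
  have per_i : ∀ i : Fin m, ((∏ k : Fin e, Mult i k : ℕ) : ℚ)⁻¹ ≤
      ((CP : ℚ) * ((E i).card : ℚ)) / ((∏ k : Fin e, Nk k : ℕ) : ℚ) := by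
    intro i
    have hMpos : (0 : ℚ) < ((∏ k : Fin e, Mult i k : ℕ) : ℚ) := by
      exact_mod_cast Finset.prod_pos fun k _ => Nat.multinomial_pos _ _
    rw [le_div_iff₀ hNpos, inv_mul_le_iff₀ hMpos]
    have h1 : (∏ k : Fin e, Nk k) ≤ (∏ k : Fin e, Mult i k) * (CP * (E i).card) := by
      rw [← Nat.mul_assoc]
      exact hprod i
    exact_mod_cast h1
  have hCk_goal : ∀ k, ((X k ∩ S).card + d - 1).choose (d - 1) = Ck k := by
    intro k
    rw [hCkdef]
    congr 1
    rw [Fintype.card_coe]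
    have h1 : (Y k).card = (X k ∩ S).card := rfl
    rw [h1]
    omega
  have hMult_goal : ∀ (i : Fin m) (k : Fin e),
      Nat.multinomial Finset.univ (fun r : Fin d => ((A i r) ∩ X k).card) = Mult i k :=
    fun i k => rfl
  simp only [hCk_goal, hMult_goal]
  have hcastprod : ∀ i : Fin m, (∏ k : Fin e, ((Mult i k : ℕ) : ℚ)) =
      ((∏ k : Fin e, Mult i k : ℕ) : ℚ) := fun i => (Nat.cast_prod _ _).symm
  calc ∑ i : Fin m, (∏ k : Fin e, ((Mult i k : ℕ) : ℚ))⁻¹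
      = ∑ i : Fin m, ((∏ k : Fin e, Mult i k : ℕ) : ℚ)⁻¹ := by
        exact Finset.sum_congr rfl fun i _ => by rw [hcastprod i]
    _ ≤ ∑ i : Fin m, ((CP : ℚ) * ((E i).card : ℚ)) / ((∏ k : Fin e, Nk k : ℕ) : ℚ) :=
        Finset.sum_le_sum fun i _ => per_i i
    _ = ((CP : ℚ) / ((∏ k : Fin e, Nk k : ℕ) : ℚ)) * ∑ i : Fin m, ((E i).card : ℚ) := by
        rw [Finset.mul_sum]
        exact Finset.sum_congr rfl fun i _ => by ring
    _ ≤ ((CP : ℚ) / ((∏ k : Fin e, Nk k : ℕ) : ℚ)) * ((∏ k : Fin e, Nk k : ℕ) : ℚ) := by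
        apply mul_le_mul_of_nonneg_left _ (by positivity)
        exact_mod_cast hsum
    _ = (CP : ℚ) := div_mul_cancel₀ _ (ne_of_gt hNpos)
    _ = (∏ k : Fin e, ((Ck k : ℕ) : ℚ)) / ((Ck l : ℕ) : ℚ) := by
        rw [eq_div_iff (by exact_mod_cast (hCkpos l).ne' : ((Ck l : ℕ) : ℚ) ≠ 0)]
        rw [← Nat.cast_prod]
        exact_mod_cast by rw [Nat.mul_comm] at hCLCP; exact hCLCP


end Main

end SymBollobas

/-- **Theorem (symmetric Bollobás systems over a partitioned ground set).**
If `[n]` is the disjoint union of `X_1, …, X_e`, `d ≥ 2`, and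
`{(A_i^{(1)}, …, A_i^{(d)})}_{1 ≤ i ≤ m}` is a symmetric Bollobás system of
`d`-partitions of `[n]`, with `s_k = |X_k ∩ S|` where `S` is the support, then
`∑_i (∏_k multinomial(…))⁻¹ ≤ min_{l ∈ [e]} (∏_k C(s_k+d-1, d-1)) / C(s_l+d-1, d-1)`. -/
theorem symmetric_bollobas_partitioned (n d e m : ℕ) (hd : 2 ≤ d) (he : 0 < e)
    (X : Fin e → Finset ℕ)
    (hXdisj : ∀ k l : Fin e, k ≠ l → Disjoint (X k) (X l))
    (hXcover : Finset.univ.biUnion X = Finset.Icc 1 n)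
    (A : Fin m → Fin d → Finset ℕ)
    (hAsub : ∀ i r, A i r ⊆ Finset.Icc 1 n)
    (hAdisj : ∀ i, ∀ p q : Fin d, p ≠ q → Disjoint (A i p) (A i q))
    (hsymm : ∀ i j : Fin m, i < j →
      ∃ p q : Fin d, p < q ∧
        ((A i p) ∩ (A j q)).Nonempty ∧ ((A j p) ∩ (A i q)).Nonempty) :
    ∑ i : Fin m, (∏ k : Fin e,
        ((Nat.multinomial Finset.univ
          fun r : Fin d => ((A i r) ∩ X k).card : ℕ) : ℚ))⁻¹
      ≤ Finset.inf' Finset.univ ⟨⟨0, he⟩, Finset.mem_univ _⟩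
          (fun l : Fin e =>
            (∏ k : Fin e,
              ((((X k ∩ (Finset.univ.biUnion fun i : Fin m =>
                    Finset.univ.biUnion fun r : Fin d => A i r)).card
                  + d - 1).choose (d - 1) : ℕ) : ℚ)) /
            ((((X l ∩ (Finset.univ.biUnion fun i : Fin m =>
                  Finset.univ.biUnion fun r : Fin d => A i r)).card
                + d - 1).choose (d - 1) : ℕ) : ℚ)) := by
  apply Finset.le_inf'
  intro l _
  exact SymBollobas.key_lemma n d e m X A hd hXcover hAsub hAdisj hsymm l
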